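/- Let X ∈ ℝ^{m×n} with every row standard deviation σ_i(X) positive and set σ_min = min_i σ_i(X). Then for every direction V ∈ ℝ^{m×n}, the Fréchet derivative of LayerNorm at X satisfies ‖D LayerNorm(X)[V]‖_F ≤ (1/σ_min + ‖X‖₂²/(√n·σ_min³))·‖V‖_F. -/

import Mathlib

noncomputable section

open Matrix

attribute [local instance] Matrix.frobeniusNormedAddCommGroup Matrix.frobeniusNormedSpace

/-- Frobenius norm of a real matrix. -/
def frob {m n : ℕ} (A : Matrix (Fin m) (Fin n) ℝ) : ℝ :=
  Real.sqrt (∑ i, ∑ j, A i j ^ 2)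

/-- Spectral norm (largest singular value) of a real matrix: the operator norm of the
associated linear map between Euclidean spaces. -/
def spec {m n : ℕ} (A : Matrix (Fin m) (Fin n) ℝ) : ℝ :=
  ‖LinearMap.toContinuousLinearMap (Matrix.toEuclideanLin A)‖

/-- Centering matrix `C = Iₙ - (1/n)·𝟙𝟙ᵀ`. -/
def centerC (n : ℕ) : Matrix (Fin n) (Fin n) ℝ :=
  1 - (n : ℝ)⁻¹ • Matrix.of (fun _ _ => (1 : ℝ))

/-- Row-centered matrix `M(X) = X·C`. -/
def centered {m n : ℕ} (X : Matrix (Fin m) (Fin n) ℝ) : Matrix (Fin m) (Fin n) ℝ :=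
  X * centerC n

/-- Row standard deviations `σᵢ(X) = sqrt((1/n)·Σⱼ M(X)ᵢⱼ²)`. -/
def rowSigma {m n : ℕ} (X : Matrix (Fin m) (Fin n) ℝ) (i : Fin m) : ℝ :=
  Real.sqrt ((n : ℝ)⁻¹ * ∑ j, centered X i j ^ 2)

/-- `P(X) = diag(σ₁(X),…,σ_m(X))⁻¹`. -/
def Pmat {m n : ℕ} (X : Matrix (Fin m) (Fin n) ℝ) : Matrix (Fin m) (Fin m) ℝ :=
  Matrix.diagonal fun i => (rowSigma X i)⁻¹

/-- `LayerNorm(X) = P(X)·M(X)`. -/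
def layerNorm {m n : ℕ} (X : Matrix (Fin m) (Fin n) ℝ) : Matrix (Fin m) (Fin n) ℝ :=
  Pmat X * centered X

/-! ### Auxiliary lemmas -/

def centLM {m n : ℕ} (i : Fin m) (j : Fin n) : Matrix (Fin m) (Fin n) ℝ →ₗ[ℝ] ℝ where
  toFun Y := centered Y i j
  map_add' Y Z := by simp [centered, Matrix.add_mul]
  map_smul' c Y := by simp [centered, Matrix.smul_mul]

def centCLM {m n : ℕ} (i : Fin m) (j : Fin n) : Matrix (Fin m) (Fin n) ℝ →L[ℝ] ℝ :=
  LinearMap.toContinuousLinearMap (centLM i j)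

@[simp] lemma centCLM_apply {m n : ℕ} (i : Fin m) (j : Fin n) (V : Matrix (Fin m) (Fin n) ℝ) :
    centCLM i j V = centered V i j := rfl

lemma hcent {m n : ℕ} (X : Matrix (Fin m) (Fin n) ℝ) (i : Fin m) (j : Fin n) :
    HasFDerivAt (fun Y : Matrix (Fin m) (Fin n) ℝ => centered Y i j) (centCLM i j) X :=
  (centCLM i j).hasFDerivAt

lemma layerNorm_entry {m n : ℕ} (Y : Matrix (Fin m) (Fin n) ℝ) (i : Fin m) (j : Fin n) :
    layerNorm Y i j = (rowSigma Y i)⁻¹ * centered Y i j := by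
  simp [layerNorm, Pmat, Matrix.diagonal_mul]

lemma centered_entry {m n : ℕ} (Y : Matrix (Fin m) (Fin n) ℝ) (i : Fin m) (j : Fin n) :
    centered Y i j = Y i j - (n : ℝ)⁻¹ * ∑ k, Y i k := by
  simp [centered, centerC, Matrix.mul_apply, Matrix.sub_apply, Matrix.one_apply, mul_sub,
    Finset.mul_sum, Finset.sum_sub_distrib, mul_comm, ite_mul, Finset.sum_mul]

lemma exists_deriv {m n : ℕ} (X : Matrix (Fin m) (Fin n) ℝ) (hσ : ∀ i, 0 < rowSigma X i) :
    ∃ D : Matrix (Fin m) (Fin n) ℝ →L[ℝ] Matrix (Fin m) (Fin n) ℝ,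
      HasFDerivAt (fun Y : Matrix (Fin m) (Fin n) ℝ => layerNorm Y) D X ∧
      ∀ V i j, D V i j = (rowSigma X i)⁻¹ * centered V i j
        - ((rowSigma X i) ^ 3)⁻¹ * (n : ℝ)⁻¹ * (∑ k, centered X i k * centered V i k)
            * centered X i j := by
  have hs0 : ∀ i, (0:ℝ) < (n : ℝ)⁻¹ * ∑ j, centered X i j ^ 2 := fun i =>
    Real.sqrt_pos.mp (hσ i)
  have h2 : ∀ i, HasFDerivAt (fun Y : Matrix (Fin m) (Fin n) ℝ =>
        (n : ℝ)⁻¹ * ∑ j, centered Y i j ^ 2)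
      ((n : ℝ)⁻¹ • ∑ j : Fin n,
        (centered X i j • centCLM i j + centered X i j • centCLM i j)) X := by
    intro i
    have h := (HasFDerivAt.fun_sum (u := Finset.univ)
      (fun j _ => (hcent X i j).mul (hcent X i j))).const_mul ((n : ℝ)⁻¹)
    simp only [pow_two]
    exact h
  have h3 : ∀ i, HasFDerivAt (fun Y : Matrix (Fin m) (Fin n) ℝ => rowSigma Y i)
      ((1 / (2 * rowSigma X i)) • ((n : ℝ)⁻¹ • ∑ j : Fin n,
        (centered X i j • centCLM i j + centered X i j • centCLM i j))) X := by
    intro i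
    exact (Real.hasDerivAt_sqrt (ne_of_gt (hs0 i))).comp_hasFDerivAt X (h2 i)
  have h4 : ∀ i, HasFDerivAt (fun Y : Matrix (Fin m) (Fin n) ℝ => (rowSigma Y i)⁻¹)
      ((-(rowSigma X i ^ 2)⁻¹) • ((1 / (2 * rowSigma X i)) • ((n : ℝ)⁻¹ • ∑ j : Fin n,
        (centered X i j • centCLM i j + centered X i j • centCLM i j)))) X := by
    intro i
    exact (hasDerivAt_inv (ne_of_gt (hσ i))).comp_hasFDerivAt X (h3 i)
  have h5 : ∀ i j, HasFDerivAt (fun Y : Matrix (Fin m) (Fin n) ℝ =>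
        (rowSigma Y i)⁻¹ * centered Y i j)
      ((rowSigma X i)⁻¹ • centCLM i j + centered X i j •
        ((-(rowSigma X i ^ 2)⁻¹) • ((1 / (2 * rowSigma X i)) • ((n : ℝ)⁻¹ • ∑ j : Fin n,
        (centered X i j • centCLM i j + centered X i j • centCLM i j))))) X :=
    fun i j => (h4 i).mul (hcent X i j)
  refine ⟨∑ i : Fin m, ∑ j : Fin n, ContinuousLinearMap.smulRight
      ((rowSigma X i)⁻¹ • centCLM i j + centered X i j •
        ((-(rowSigma X i ^ 2)⁻¹) • ((1 / (2 * rowSigma X i)) • ((n : ℝ)⁻¹ • ∑ k : Fin n,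
        (centered X i k • centCLM i k + centered X i k • centCLM i k)))))
      (Matrix.single i j (1:ℝ)), ?_, ?_⟩
  · have h6 := HasFDerivAt.fun_sum (u := (Finset.univ : Finset (Fin m)))
      (fun i _ => HasFDerivAt.fun_sum (u := (Finset.univ : Finset (Fin n)))
        (fun j _ => (h5 i j).smul_const (Matrix.single i j (1:ℝ))))
    have hfun : (fun Y : Matrix (Fin m) (Fin n) ℝ => layerNorm Y)
        = fun Y => ∑ i : Fin m, ∑ j : Fin n,
            ((rowSigma Y i)⁻¹ * centered Y i j) • Matrix.single i j (1:ℝ) := by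
      funext Y
      conv_lhs => rw [Matrix.matrix_eq_sum_single (layerNorm Y)]
      refine Finset.sum_congr rfl fun i _ => Finset.sum_congr rfl fun j _ => ?_
      rw [layerNorm_entry, Matrix.smul_single, smul_eq_mul, mul_one]
    rw [hfun]
    exact h6
  · intro V i j
    have hσi := (hσ i).ne'
    simp only [ContinuousLinearMap.coe_sum', Finset.sum_apply, Matrix.sum_apply,
      ContinuousLinearMap.smulRight_apply, ContinuousLinearMap.add_apply,
      ContinuousLinearMap.smul_apply, centCLM_apply, Matrix.smul_apply,
      Matrix.single, Matrix.of_apply, smul_eq_mul, mul_ite, mul_one, mul_zero]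
    rw [Finset.sum_eq_single i, Finset.sum_eq_single j]
    · simp only [and_self, if_true]
      rw [Finset.sum_add_distrib]
      field_simp
      ring
    · intro b _ hb; simp [hb]
    · intro hj; exact absurd (Finset.mem_univ j) hj
    · intro b _ hb; simp [hb, Finset.sum_ite_of_false]
    · intro hi; exact absurd (Finset.mem_univ i) hi

lemma frob_eq_norm {m n : ℕ} (A : Matrix (Fin m) (Fin n) ℝ) : frob A = ‖A‖ := by
  rw [frob, Matrix.frobenius_norm_def, Real.sqrt_eq_rpow]
  congr 1
  exact Finset.sum_congr rfl fun i _ => Finset.sum_congr rfl fun j _ => by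
    rw [Real.norm_eq_abs, show ((2:ℝ)) = ((2:ℕ):ℝ) by norm_num, Real.rpow_natCast, sq_abs]

lemma frob_nonneg {m n : ℕ} (A : Matrix (Fin m) (Fin n) ℝ) : 0 ≤ frob A :=
  Real.sqrt_nonneg _

lemma frob_le_mul {m n : ℕ} {A B : Matrix (Fin m) (Fin n) ℝ} {c : ℝ} (hc : 0 ≤ c)
    (h : ∑ i, ∑ j, A i j ^ 2 ≤ c ^ 2 * ∑ i, ∑ j, B i j ^ 2) : frob A ≤ c * frob B := by
  have hcb : c * frob B = Real.sqrt (c ^ 2 * ∑ i, ∑ j, B i j ^ 2) := by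
    rw [Real.sqrt_mul (sq_nonneg c), Real.sqrt_sq hc, frob]
  rw [hcb]
  exact Real.sqrt_le_sqrt h

lemma sum_sq_centered_le {m n : ℕ} (hn : 0 < n) (V : Matrix (Fin m) (Fin n) ℝ) (i : Fin m) :
    ∑ j, centered V i j ^ 2 ≤ ∑ j, V i j ^ 2 := by
  have hn' : (0:ℝ) < n := by exact_mod_cast hn
  have hexp : ∑ j, centered V i j ^ 2
      = (∑ j, V i j ^ 2) - (n : ℝ)⁻¹ * (∑ k, V i k) ^ 2 := by
    simp only [centered_entry, sub_sq]
    rw [Finset.sum_add_distrib, Finset.sum_sub_distrib]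
    rw [← Finset.sum_mul, Finset.sum_const, Finset.card_univ, Fintype.card_fin]
    rw [← Finset.mul_sum]
    field_simp
    linear_combination (∑ k, V i k) ^ 2 * ((n : ℝ) * (n : ℝ)⁻¹ + 1) * mul_inv_cancel₀ hn'.ne'
  rw [hexp]
  have h0 : 0 ≤ (n : ℝ)⁻¹ * (∑ k, V i k) ^ 2 := by positivity
  linarith

lemma row_sq_le_spec {m n : ℕ} (X : Matrix (Fin m) (Fin n) ℝ) (i : Fin m) :
    ∑ j, X i j ^ 2 ≤ spec X ^ 2 := by
  set W : ℝ := ∑ j, X i j ^ 2 with hW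
  have hW0 : 0 ≤ W := by positivity
  rcases eq_or_lt_of_le hW0 with h0 | hpos
  · rw [← h0]; positivity
  · set v : EuclideanSpace ℝ (Fin n) := (WithLp.equiv 2 (Fin n → ℝ)).symm (fun j => X i j)
      with hv_def
    have hv : ‖v‖ = Real.sqrt W := by
      rw [EuclideanSpace.norm_eq]
      congr 1
      exact Finset.sum_congr rfl fun j _ => by
        rw [hv_def, WithLp.equiv_symm_apply, PiLp.toLp_apply, Real.norm_eq_abs, sq_abs]
    have happly : (Matrix.toEuclideanLin X v) i = W := by
      rw [Matrix.toEuclideanLin_apply, PiLp.toLp_apply]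
      simp only [Matrix.mulVec, dotProduct, hv_def, WithLp.equiv_symm_apply, WithLp.ofLp_toLp]
      rw [hW]
      exact Finset.sum_congr rfl fun j _ => (pow_two (X i j)).symm
    have hcoord : |(Matrix.toEuclideanLin X v) i| ≤ ‖Matrix.toEuclideanLin X v‖ := by
      rw [EuclideanSpace.norm_eq, ← Real.sqrt_sq_eq_abs]
      refine Real.sqrt_le_sqrt ?_
      have hs := Finset.single_le_sum
        (f := fun k => ‖(Matrix.toEuclideanLin X v) k‖ ^ 2)
        (fun k _ => by positivity) (Finset.mem_univ i)
      simpa [Real.norm_eq_abs, sq_abs] using hs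
    have hop : ‖Matrix.toEuclideanLin X v‖ ≤ spec X * ‖v‖ := by
      have h := (LinearMap.toContinuousLinearMap (Matrix.toEuclideanLin X)).le_opNorm v
      simpa [spec] using h
    have hchain := hcoord.trans hop
    rw [happly, hv, abs_of_nonneg hW0] at hchain
    have hsW : 0 < Real.sqrt W := Real.sqrt_pos.mpr hpos
    have hWsq : W = Real.sqrt W * Real.sqrt W := (Real.mul_self_sqrt hW0).symm
    have h1 : Real.sqrt W ≤ spec X := by nlinarith
    calc W = Real.sqrt W ^ 2 := (Real.sq_sqrt hW0).symm
      _ ≤ spec X ^ 2 := by nlinarith [Real.sqrt_nonneg W]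

lemma sum_sq_centered_le_spec {m n : ℕ} (hn : 0 < n) (X : Matrix (Fin m) (Fin n) ℝ)
    (i : Fin m) : ∑ j, centered X i j ^ 2 ≤ spec X ^ 2 :=
  (sum_sq_centered_le hn X i).trans (row_sq_le_spec X i)

lemma aux_row_bound {σ s nn P T R W S2 : ℝ} (hs : 0 < s) (hσle : s ≤ σ) (hnn : 0 ≤ nn)
    (hP : P ^ 2 ≤ T * R) (hT : T ≤ S2) (hT0 : 0 ≤ T) (hR0 : 0 ≤ R) (hRW : R ≤ W)
    (hS2 : 0 ≤ S2) :
    ((σ ^ 3)⁻¹ * nn * P) ^ 2 * T ≤ ((s ^ 3)⁻¹ * nn * S2) ^ 2 * W := by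
  have hW0 : 0 ≤ W := hR0.trans hRW
  have h1 : P ^ 2 * T ≤ S2 ^ 2 * W := by
    nlinarith [mul_le_mul_of_nonneg_right hP hT0, mul_le_mul hT hRW hR0 hS2,
      mul_le_mul_of_nonneg_right (mul_le_mul hT hRW hR0 hS2) hT0,
      mul_le_mul_of_nonneg_left hT (mul_nonneg hS2 hW0)]
  have h2 : ((σ ^ 3)⁻¹) ^ 2 ≤ ((s ^ 3)⁻¹) ^ 2 := by
    have hinv := inv_anti₀ (by positivity : (0:ℝ) < s ^ 3)
      (pow_le_pow_left₀ hs.le hσle 3)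
    have hσ0 : (0:ℝ) < σ := hs.trans_le hσle
    exact pow_le_pow_left₀ (inv_nonneg.mpr (pow_nonneg hσ0.le 3)) hinv 2
  calc ((σ ^ 3)⁻¹ * nn * P) ^ 2 * T = ((σ ^ 3)⁻¹) ^ 2 * nn ^ 2 * (P ^ 2 * T) := by ring
    _ ≤ ((s ^ 3)⁻¹) ^ 2 * nn ^ 2 * (S2 ^ 2 * W) := by
        refine mul_le_mul (mul_le_mul h2 le_rfl (by positivity) (by positivity)) h1
          (by positivity) (by positivity)
    _ = ((s ^ 3)⁻¹ * nn * S2) ^ 2 * W := by ring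

/-- LayerNorm Jacobian norm bound. -/
theorem layerNorm_jacobian_norm_bound {m n : ℕ} (hm : 0 < m)
    (X : Matrix (Fin m) (Fin n) ℝ) (hσ : ∀ i, 0 < rowSigma X i) :
    DifferentiableAt ℝ (fun Y : Matrix (Fin m) (Fin n) ℝ => layerNorm Y) X ∧
    ∀ V : Matrix (Fin m) (Fin n) ℝ,
      frob (fderiv ℝ (fun Y : Matrix (Fin m) (Fin n) ℝ => layerNorm Y) X V) ≤
        ((⨅ i, rowSigma X i)⁻¹ +
          spec X ^ 2 / (Real.sqrt n * (⨅ i, rowSigma X i) ^ 3)) * frob V := by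
  haveI : Nonempty (Fin m) := ⟨⟨0, hm⟩⟩
  obtain ⟨i₀, hi₀⟩ := Finite.exists_min (rowSigma X)
  have hbdd : BddBelow (Set.range (rowSigma X)) := (Set.finite_range _).bddBelow
  set σmin := ⨅ i, rowSigma X i with hσmin_def
  have hmin_le : ∀ i, σmin ≤ rowSigma X i := fun i => ciInf_le hbdd i
  have hmin_eq : σmin = rowSigma X i₀ := le_antisymm (ciInf_le hbdd i₀) (le_ciInf hi₀)
  have hσmin : 0 < σmin := hmin_eq ▸ hσ i₀
  have hn : 0 < n := by
    rcases Nat.eq_zero_or_pos n with rfl | hn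
    · exact absurd (hσ i₀) (by simp [rowSigma])
    · exact hn
  have hn' : (0:ℝ) < n := by exact_mod_cast hn
  obtain ⟨D, hD, happ⟩ := exists_deriv X hσ
  refine ⟨hD.differentiableAt, fun V => ?_⟩
  rw [hD.fderiv]
  set A : Matrix (Fin m) (Fin n) ℝ :=
    Matrix.of (fun i j => (rowSigma X i)⁻¹ * centered V i j) with hA
  set B : Matrix (Fin m) (Fin n) ℝ :=
    Matrix.of (fun i j => ((rowSigma X i) ^ 3)⁻¹ * (n : ℝ)⁻¹ *
      (∑ k, centered X i k * centered V i k) * centered X i j) with hB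
  have hDV : D V = A - B := by
    ext i j
    simp [hA, hB, Matrix.sub_apply, happ]
  rw [hDV]
  have htri : frob (A - B) ≤ frob A + frob B := by
    rw [frob_eq_norm, frob_eq_norm, frob_eq_norm]
    exact norm_sub_le A B
  have hAbound : frob A ≤ σmin⁻¹ * frob V := by
    refine frob_le_mul (by positivity) ?_
    rw [Finset.mul_sum]
    refine Finset.sum_le_sum fun i _ => ?_
    calc ∑ j, (A i j) ^ 2 = ((rowSigma X i)⁻¹) ^ 2 * ∑ j, centered V i j ^ 2 := by
          simp [hA, mul_pow, Finset.mul_sum]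
      _ ≤ (σmin⁻¹) ^ 2 * ∑ j, V i j ^ 2 := by
          refine mul_le_mul ?_ (sum_sq_centered_le hn V i) (by positivity) (by positivity)
          exact pow_le_pow_left₀ (inv_nonneg.mpr (hσ i).le) (inv_anti₀ hσmin (hmin_le i)) 2
  have hBbound : frob B ≤ ((σmin ^ 3)⁻¹ * (n : ℝ)⁻¹ * spec X ^ 2) * frob V := by
    refine frob_le_mul (by positivity) ?_
    rw [Finset.mul_sum]
    refine Finset.sum_le_sum fun i _ => ?_
    have hsum : ∑ j, (B i j) ^ 2
        = ((rowSigma X i ^ 3)⁻¹ * (n : ℝ)⁻¹ * (∑ k, centered X i k * centered V i k)) ^ 2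
          * ∑ j, centered X i j ^ 2 := by
      rw [Finset.mul_sum]
      exact Finset.sum_congr rfl fun j _ => by simp [hB]; ring
    rw [hsum]
    exact aux_row_bound hσmin (hmin_le i) (by positivity)
      (Finset.sum_mul_sq_le_sq_mul_sq Finset.univ (centered X i) (centered V i))
      (sum_sq_centered_le_spec hn X i) (by positivity) (by positivity)
      (sum_sq_centered_le hn V i) (by positivity)
  have hsqrtn : 0 < Real.sqrt n := Real.sqrt_pos.mpr hn'
  have hsn : Real.sqrt n ≤ n := by
    nlinarith [Real.sq_sqrt hn'.le, (by exact_mod_cast hn : (1:ℝ) ≤ (n:ℝ))]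
  calc frob (A - B) ≤ frob A + frob B := htri
    _ ≤ σmin⁻¹ * frob V + ((σmin ^ 3)⁻¹ * (n : ℝ)⁻¹ * spec X ^ 2) * frob V :=
        add_le_add hAbound hBbound
    _ ≤ (σmin⁻¹ + spec X ^ 2 / (Real.sqrt n * σmin ^ 3)) * frob V := by
        rw [add_mul]
        refine add_le_add le_rfl (mul_le_mul_of_nonneg_right ?_ (frob_nonneg V))
        have heq : (σmin ^ 3)⁻¹ * (n : ℝ)⁻¹ * spec X ^ 2 = spec X ^ 2 / ((n : ℝ) * σmin ^ 3) := by
          rw [div_eq_mul_inv, mul_inv]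
          ring
        rw [heq]
        refine div_le_div_of_nonneg_left (by positivity) (by positivity) ?_
        exact mul_le_mul_of_nonneg_right hsn (by positivity)
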